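/- For β>0 and the function f_λ(l) = l⁴ − l³ + λ(1 − l/3)³ with λ = 81/(4β), f_λ has a double positive root (i.e. a value l>0 with f_λ(l)=f_λ'(l)=0) exactly for λ = 27(26−15√3)/2 with root l = 3(2−√3), and λ = 27(26+15√3)/2 with root l = 3(2+√3). -/

import Mathlib

open Real

/-- For `λ > 0` and `f_λ l = l⁴ − l³ + λ(1 − l/3)³`, `f_λ` has a
double positive root exactly for `λ = 27(26−15√3)/2` with root `l = 3(2−√3)`,
and `λ = 27(26+15√3)/2` with root `l = 3(2+√3)`. -/
theorem stmt9 :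
    ∀ lam > (0:ℝ), ∀ l > (0:ℝ),
      ((fun x : ℝ => x ^ 4 - x ^ 3 + lam * (1 - x / 3) ^ 3) l = 0 ∧
        deriv (fun x : ℝ => x ^ 4 - x ^ 3 + lam * (1 - x / 3) ^ 3) l = 0) ↔
      ((lam = 27 * (26 - 15 * Real.sqrt 3) / 2 ∧ l = 3 * (2 - Real.sqrt 3)) ∨
        (lam = 27 * (26 + 15 * Real.sqrt 3) / 2 ∧ l = 3 * (2 + Real.sqrt 3))) := by
  intro lam hlam l hl
  set s := Real.sqrt 3 with hsdef
  have hsnn : (0:ℝ) ≤ s := Real.sqrt_nonneg 3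
  have hs : s ^ 2 = 3 := Real.sq_sqrt (by norm_num)
  have hs2 : s < 2 := by nlinarith
  have hderiv : deriv (fun x : ℝ => x ^ 4 - x ^ 3 + lam * (1 - x / 3) ^ 3) l
      = 4 * l ^ 3 - 3 * l ^ 2 - lam * (1 - l / 3) ^ 2 := by
    have h1 : HasDerivAt (fun x : ℝ => x ^ 4) (4 * l ^ 3) l := by
      simpa using hasDerivAt_pow 4 l
    have h2 : HasDerivAt (fun x : ℝ => x ^ 3) (3 * l ^ 2) l := by
      simpa using hasDerivAt_pow 3 l
    have h3 : HasDerivAt (fun x : ℝ => 1 - x / 3) (-(1/3)) l := by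
      simpa using ((hasDerivAt_id l).div_const 3).const_sub 1
    have h4 := (h3.pow 3).const_mul lam
    have h5 := (h1.sub h2).add h4
    have := h5.deriv
    rw [show deriv (fun x : ℝ => x ^ 4 - x ^ 3 + lam * (1 - x / 3) ^ 3) l = _ from this]
    ring
  rw [hderiv]
  constructor
  · rintro ⟨hf0, hd⟩
    have hf : l ^ 4 - l ^ 3 + lam * (1 - l / 3) ^ 3 = 0 := hf0
    have hA : lam * (1 - l / 3) ^ 2 = 4 * l ^ 3 - 3 * l ^ 2 := by linarith
    have h5 : l ^ 4 - l ^ 3 + (1 - l / 3) * (4 * l ^ 3 - 3 * l ^ 2) = 0 := by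
      linear_combination hf - (1 - l / 3) * hA
    have hll : l ^ 2 * (l ^ 2 - 12 * l + 9) = 0 := by linear_combination (-3) * h5
    have hquad : l ^ 2 - 12 * l + 9 = 0 := by
      rcases mul_eq_zero.mp hll with h | h
      · exact absurd h (by positivity)
      · exact h
    have hfac : (l - 6 - 3 * s) * (l - 6 + 3 * s) = 0 := by
      linear_combination hquad - 9 * hs
    rcases mul_eq_zero.mp hfac with h | h
    · -- l = 6 + 3s
      have hlval : l = 3 * (2 + s) := by linarith
      right
      refine ⟨?_, hlval⟩
      rw [hlval] at hA
      have hkey : lam * (4 + 2 * s) = 2619 + 1512 * s := by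
        linear_combination hA + (108 * s + 621 - lam) * hs
      have h2' : lam * (4 + 2 * s) = (27 * (26 + 15 * s) / 2) * (4 + 2 * s) := by
        linear_combination hkey - 405 * hs
      exact mul_right_cancel₀ (by nlinarith) h2'
    · -- l = 6 - 3s
      have hlval : l = 3 * (2 - s) := by linarith
      left
      refine ⟨?_, hlval⟩
      rw [hlval] at hA
      have hkey : lam * (4 - 2 * s) = 2619 - 1512 * s := by
        linear_combination hA + (621 - 108 * s - lam) * hs
      have h2' : lam * (4 - 2 * s) = (27 * (26 - 15 * s) / 2) * (4 - 2 * s) := by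
        linear_combination hkey - 405 * hs
      exact mul_right_cancel₀ (by nlinarith) h2'
  · rintro (⟨hlamv, hlval⟩ | ⟨hlamv, hlval⟩) <;> subst hlamv <;> subst hlval <;>
      constructor
    · show (3 * (2 - s)) ^ 4 - (3 * (2 - s)) ^ 3
        + (27 * (26 - 15 * s) / 2) * (1 - 3 * (2 - s) / 3) ^ 3 = 0
      linear_combination (-(243/2) * s ^ 2 + (675/2) * s - 243) * hs
    · linear_combination ((189/2) * s - 135) * hs
    · show (3 * (2 + s)) ^ 4 - (3 * (2 + s)) ^ 3
        + (27 * (26 + 15 * s) / 2) * (1 - 3 * (2 + s) / 3) ^ 3 = 0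
      linear_combination (-(243/2) * s ^ 2 - (675/2) * s - 243) * hs
    · linear_combination (-(189/2) * s - 135) * hs
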